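/- Let Ψ > 0 and let Φ, Ω, y₀, z₀ be real numbers with y₀, z₀ > 0. Then ∫_{−y₀}^{y₀} ∫_{−z₀}^{z₀} [Ψ² + (u − Φ)² + (v − Ω)²]^{−3/2} dv du = (1/Ψ)·[ G(y₀ − Φ, z₀ − Ω) + G(y₀ − Φ, z₀ + Ω) + G(y₀ + Φ, z₀ − Ω) + G(y₀ + Φ, z₀ + Ω) ]. -/

import Mathlib

open Real


lemma rpow_neg_three_half (x : ℝ) (hx : 0 < x) :
    x ^ (-(3:ℝ)/2) = 1 / (x * Real.sqrt x) := by
  rw [show (-(3:ℝ)/2) = -(3/2) by ring, Real.rpow_neg hx.le,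
    show (3:ℝ)/2 = 1 + 1/2 by ring, Real.rpow_add hx, Real.rpow_one,
    ← Real.sqrt_eq_rpow, one_div]

lemma inner_deriv (A : ℝ) (hA : 0 < A) (Ω v : ℝ) :
    HasDerivAt (fun v => (v - Ω) / (A * Real.sqrt (A + (v - Ω)^2)))
      ((A + (v - Ω)^2) ^ (-(3:ℝ)/2)) v := by
  have hw : HasDerivAt (fun v : ℝ => v - Ω) 1 v := (hasDerivAt_id v).sub_const Ω
  have hs0 : 0 < A + (v - Ω)^2 := by positivity
  have hbase : HasDerivAt (fun v : ℝ => A + (v - Ω)^2) (2 * (v - Ω)) v := by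
    have h2 : HasDerivAt (fun v : ℝ => (v - Ω)^2) (2 * (v - Ω)) v := by
      simpa using (hw.fun_pow 2)
    simpa using h2.const_add A
  have hs := hbase.sqrt (by positivity)
  have hden := hs.const_mul A
  have hne : A * Real.sqrt (A + (v - Ω)^2) ≠ 0 := by positivity
  have hH := hw.fun_div hden hne
  refine hH.congr_deriv (Eq.symm ?_)
  have hsq : Real.sqrt (A + (v - Ω)^2) ^ 2 = A + (v - Ω)^2 := Real.sq_sqrt hs0.le
  have hsne : Real.sqrt (A + (v - Ω)^2) ≠ 0 := by positivity
  rw [rpow_neg_three_half _ hs0]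
  field_simp
  linear_combination (-(v - Ω)^2) * hsq

lemma inner_integral (A : ℝ) (hA : 0 < A) (Ω z₀ : ℝ) :
    (∫ v in (-z₀)..z₀, (A + (v - Ω)^2) ^ (-(3:ℝ)/2))
      = (z₀ - Ω) / (A * Real.sqrt (A + (z₀ - Ω)^2))
        + (z₀ + Ω) / (A * Real.sqrt (A + (z₀ + Ω)^2)) := by
  have hcont : Continuous fun v : ℝ => (A + (v - Ω)^2) ^ (-(3:ℝ)/2) := by
    apply Continuous.rpow_const (by continuity)
    intro v; left; positivity
  rw [intervalIntegral.integral_eq_sub_of_hasDerivAt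
    (fun v _ => inner_deriv A hA Ω v) (hcont.intervalIntegrable _ _)]
  have h1 : (-z₀ - Ω)^2 = (z₀ + Ω)^2 := by ring
  rw [h1]
  ring

lemma outer_deriv (Ψ c : ℝ) (hΨ : 0 < Ψ) (x : ℝ) :
    HasDerivAt (fun x => (1/Ψ) * Real.arctan (x * c / (Ψ * Real.sqrt (Ψ^2 + x^2 + c^2))))
      (c / ((Ψ^2 + x^2) * Real.sqrt (Ψ^2 + x^2 + c^2))) x := by
  have hs0 : 0 < Ψ^2 + x^2 + c^2 := by positivity
  have hbase : HasDerivAt (fun x : ℝ => Ψ^2 + x^2 + c^2) (2 * x) x := by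
    have h2 : HasDerivAt (fun x : ℝ => x^2) (2 * x) x := by simpa using (hasDerivAt_id x).fun_pow 2
    simpa using (h2.const_add (Ψ^2)).add_const (c^2)
  have hs := hbase.sqrt (by positivity)
  have hden := hs.const_mul Ψ
  have hne : Ψ * Real.sqrt (Ψ^2 + x^2 + c^2) ≠ 0 := by positivity
  have hnum : HasDerivAt (fun x : ℝ => x * c) c x := by simpa using (hasDerivAt_id x).mul_const c
  have hq := hnum.fun_div hden hne
  have ha := (hq.arctan).const_mul (1/Ψ)
  refine ha.congr_deriv (Eq.symm ?_)
  have hsq : Real.sqrt (Ψ^2 + x^2 + c^2) ^ 2 = Ψ^2 + x^2 + c^2 := Real.sq_sqrt hs0.le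
  have hsne : Real.sqrt (Ψ^2 + x^2 + c^2) ≠ 0 := by positivity
  have hpx : (Ψ^2 + x^2) ≠ 0 := by positivity
  field_simp
  linear_combination (-c*x^2) * hsq

lemma outer_deriv' (Ψ Φ c : ℝ) (hΨ : 0 < Ψ) (u : ℝ) :
    HasDerivAt
      (fun u => (1/Ψ) * Real.arctan ((u - Φ) * c / (Ψ * Real.sqrt (Ψ^2 + (u - Φ)^2 + c^2))))
      (c / ((Ψ^2 + (u - Φ)^2) * Real.sqrt (Ψ^2 + (u - Φ)^2 + c^2))) u := by
  have h := (outer_deriv Ψ c hΨ (u - Φ)).comp u ((hasDerivAt_id u).sub_const Φ)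
  simpa [Function.comp_def] using h

/-- `G(x, y) := arctan(x·y/(Ψ·√(Ψ² + x² + y²)))`. -/
noncomputable def G (Ψ x y : ℝ) : ℝ :=
  Real.arctan (x * y / (Ψ * Real.sqrt (Ψ ^ 2 + x ^ 2 + y ^ 2)))

theorem stmt_1 (Ψ Φ Ω y₀ z₀ : ℝ) (hΨ : 0 < Ψ) (hy₀ : 0 < y₀) (hz₀ : 0 < z₀) :
    (∫ u in (-y₀)..y₀, ∫ v in (-z₀)..z₀,
        (Ψ ^ 2 + (u - Φ) ^ 2 + (v - Ω) ^ 2) ^ (-(3 : ℝ) / 2))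
      = (1 / Ψ) *
        (G Ψ (y₀ - Φ) (z₀ - Ω) + G Ψ (y₀ - Φ) (z₀ + Ω)
          + G Ψ (y₀ + Φ) (z₀ - Ω) + G Ψ (y₀ + Φ) (z₀ + Ω)) := by
  have hinner : ∀ u : ℝ,
      (∫ v in (-z₀)..z₀, (Ψ ^ 2 + (u - Φ) ^ 2 + (v - Ω) ^ 2) ^ (-(3 : ℝ) / 2))
        = (z₀ - Ω) / ((Ψ^2 + (u - Φ)^2) * Real.sqrt ((Ψ^2 + (u - Φ)^2) + (z₀ - Ω)^2))
          + (z₀ + Ω) / ((Ψ^2 + (u - Φ)^2) * Real.sqrt ((Ψ^2 + (u - Φ)^2) + (z₀ + Ω)^2)) := by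
    intro u
    have hA : 0 < Ψ^2 + (u - Φ)^2 := by positivity
    exact inner_integral (Ψ^2 + (u - Φ)^2) hA Ω z₀
  rw [intervalIntegral.integral_congr (fun u _ => hinner u)]
  -- outer FTC
  set c₁ := z₀ - Ω
  set c₂ := z₀ + Ω
  have hF : ∀ u : ℝ, HasDerivAt
      (fun u => (1/Ψ) * Real.arctan ((u - Φ) * c₁ / (Ψ * Real.sqrt (Ψ^2 + (u - Φ)^2 + c₁^2)))
        + (1/Ψ) * Real.arctan ((u - Φ) * c₂ / (Ψ * Real.sqrt (Ψ^2 + (u - Φ)^2 + c₂^2))))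
      (c₁ / ((Ψ^2 + (u - Φ)^2) * Real.sqrt ((Ψ^2 + (u - Φ)^2) + c₁^2))
        + c₂ / ((Ψ^2 + (u - Φ)^2) * Real.sqrt ((Ψ^2 + (u - Φ)^2) + c₂^2))) u := by
    intro u
    exact (outer_deriv' Ψ Φ c₁ hΨ u).add (outer_deriv' Ψ Φ c₂ hΨ u)
  have hcont : Continuous fun u : ℝ =>
      c₁ / ((Ψ^2 + (u - Φ)^2) * Real.sqrt ((Ψ^2 + (u - Φ)^2) + c₁^2))
        + c₂ / ((Ψ^2 + (u - Φ)^2) * Real.sqrt ((Ψ^2 + (u - Φ)^2) + c₂^2)) := by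
    apply Continuous.add <;>
    · apply Continuous.div continuous_const
      · continuity
      · intro u; positivity
  rw [intervalIntegral.integral_eq_sub_of_hasDerivAt (fun u _ => hF u)
    (hcont.intervalIntegrable _ _)]
  simp only [G]
  have e1 : (-y₀ - Φ) = -(y₀ + Φ) := by ring
  have e2 : ∀ c : ℝ, Real.arctan ((-y₀ - Φ) * c / (Ψ * Real.sqrt (Ψ^2 + (-y₀ - Φ)^2 + c^2)))
      = - Real.arctan ((y₀ + Φ) * c / (Ψ * Real.sqrt (Ψ^2 + (y₀ + Φ)^2 + c^2))) := by
    intro c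
    rw [show Ψ^2 + (-y₀ - Φ)^2 + c^2 = Ψ^2 + (y₀ + Φ)^2 + c^2 by ring, e1,
      show -(y₀ + Φ) * c / (Ψ * Real.sqrt (Ψ^2 + (y₀ + Φ)^2 + c^2))
        = -((y₀ + Φ) * c / (Ψ * Real.sqrt (Ψ^2 + (y₀ + Φ)^2 + c^2))) by ring,
      Real.arctan_neg]
  rw [e2 c₁, e2 c₂]
  ring
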